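/- Let F be a field. Every nonzero nilpotent matrix in M₂(F) is conjugate by an element of SL₂(F) to a matrix of the form [[0,0],[c,0]] with c ∈ F^×, and two matrices [[0,0],[c,0]] and [[0,0],[c',0]] (c, c' ∈ F^×) are conjugate by an element of SL₂(F) if and only if c/c' is a square in F^×. Hence the SL₂(F)-conjugacy classes of nonzero nilpotent 2×2 matrices are in bijection with F^×/(F^×)². -/

import Mathlib

open Matrix

lemma conj_eq_iff {F : Type*} [Field F] (g : Matrix.SpecialLinearGroup (Fin 2) F)
    (A B : Matrix (Fin 2) (Fin 2) F) :
    (g : Matrix (Fin 2) (Fin 2) F) * A * ((g⁻¹ : Matrix.SpecialLinearGroup (Fin 2) F) :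
      Matrix (Fin 2) (Fin 2) F) = B ↔ (g : Matrix (Fin 2) (Fin 2) F) * A
      = B * (g : Matrix (Fin 2) (Fin 2) F) := by
  have h1 : ((g⁻¹ : Matrix.SpecialLinearGroup (Fin 2) F) : Matrix (Fin 2) (Fin 2) F) *
      (g : Matrix (Fin 2) (Fin 2) F) = 1 := by
    rw [← Matrix.SpecialLinearGroup.coe_mul, inv_mul_cancel,
      Matrix.SpecialLinearGroup.coe_one]
  constructor
  · intro h
    rw [← h, Matrix.mul_assoc, h1, Matrix.mul_one]
  · intro h
    rw [h, Matrix.mul_assoc, ← Matrix.SpecialLinearGroup.coe_mul, mul_inv_cancel,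
      Matrix.SpecialLinearGroup.coe_one, Matrix.mul_one]

/-- Every nonzero nilpotent matrix in `M₂(F)` is `SL₂(F)`-conjugate to `[[0,0],[c,0]]` with
`c ∈ F^×`, and `[[0,0],[c,0]]`, `[[0,0],[c',0]]` are `SL₂(F)`-conjugate if and only if
`c/c'` is a square in `F^×`. Hence `SL₂(F)`-conjugacy classes of nonzero nilpotent `2×2`
matrices correspond to `F^×/(F^×)²`. -/
theorem sl2_conjugacy_of_nilpotent {F : Type*} [Field F] :
    (∀ X : Matrix (Fin 2) (Fin 2) F, X ≠ 0 → X * X = 0 →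
      ∃ (g : Matrix.SpecialLinearGroup (Fin 2) F) (c : Fˣ),
        (g : Matrix (Fin 2) (Fin 2) F) * X * ((g⁻¹ : Matrix.SpecialLinearGroup (Fin 2) F) :
          Matrix (Fin 2) (Fin 2) F) = !![0, 0; (c : F), 0]) ∧
    (∀ c c' : Fˣ,
      (∃ g : Matrix.SpecialLinearGroup (Fin 2) F,
        (g : Matrix (Fin 2) (Fin 2) F) * !![0, 0; (c : F), 0] *
          ((g⁻¹ : Matrix.SpecialLinearGroup (Fin 2) F) : Matrix (Fin 2) (Fin 2) F)
          = !![0, 0; ((c' : Fˣ) : F), 0]) ↔ ∃ a : Fˣ, a ^ 2 = c / c') := by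
  constructor
  · intro X hX0 hX2
    set a := X 0 0 with ha
    set b := X 0 1 with hb
    set d := X 1 0 with hd
    set e := X 1 1 with he
    have hXeq : X = !![a, b; d, e] := by
      ext i j; fin_cases i <;> fin_cases j <;> rfl
    rw [hXeq] at hX2
    have h00 : a * a + b * d = 0 := by
      have := congrFun (congrFun hX2 0) 0
      simpa [Matrix.mul_apply, Fin.sum_univ_two] using this
    have h10 : d * a + e * d = 0 := by
      have := congrFun (congrFun hX2 1) 0
      simpa [Matrix.mul_apply, Fin.sum_univ_two] using this
    have h11 : d * b + e * e = 0 := by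
      have := congrFun (congrFun hX2 1) 1
      simpa [Matrix.mul_apply, Fin.sum_univ_two] using this
    by_cases hdz : d = 0
    · have haz : a = 0 := by
        have : a * a = 0 := by rw [hdz] at h00; linear_combination h00
        exact mul_self_eq_zero.mp this
      have hez : e = 0 := by
        have : e * e = 0 := by rw [hdz] at h11; linear_combination h11
        exact mul_self_eq_zero.mp this
      have hbz : b ≠ 0 := by
        intro h
        apply hX0
        rw [hXeq, haz, h, hdz, hez]
        ext i j; fin_cases i <;> fin_cases j <;> rfl
      refine ⟨⟨!![0, -1; 1, 0], by simp [Matrix.det_fin_two_of]⟩, Units.mk0 (-b) (by simpa), ?_⟩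
      refine (conj_eq_iff _ _ _).mpr ?_
      rw [hXeq, haz, hdz, hez]
      ext i j
      fin_cases i <;> fin_cases j <;>
        simp [Matrix.mul_apply, Fin.sum_univ_two]
    · have he2 : e = -a := by
        have : d * (a + e) = 0 := by linear_combination h10
        rcases mul_eq_zero.mp this with h | h
        · exact absurd h hdz
        · linear_combination h
      refine ⟨⟨!![1, -a/d; 0, 1], by simp [Matrix.det_fin_two_of]⟩, Units.mk0 d hdz, ?_⟩
      refine (conj_eq_iff _ _ _).mpr ?_
      rw [hXeq, he2]
      ext i j
      fin_cases i <;> fin_cases j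
      · simp [Matrix.mul_apply, Fin.sum_univ_two]
        field_simp
        ring
      · simp [Matrix.mul_apply, Fin.sum_univ_two]
        field_simp
        all_goals first
          | linear_combination h00
          | linear_combination -h00
          | linear_combination (2:F) * h00
          | linear_combination (-2:F) * h00
          | ring
      · simp [Matrix.mul_apply, Fin.sum_univ_two]
      · simp [Matrix.mul_apply, Fin.sum_univ_two]
        field_simp
        all_goals first
          | linear_combination h00
          | linear_combination -h00
          | linear_combination (2:F) * h00
          | linear_combination (-2:F) * h00
          | ring
  · intro c c'
    constructor
    · rintro ⟨g, hg⟩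
      rw [conj_eq_iff] at hg
      set p := (g : Matrix (Fin 2) (Fin 2) F) 0 0 with hp
      set q := (g : Matrix (Fin 2) (Fin 2) F) 0 1 with hq
      set r := (g : Matrix (Fin 2) (Fin 2) F) 1 0 with hr
      set s := (g : Matrix (Fin 2) (Fin 2) F) 1 1 with hs
      have hdet : p * s - q * r = 1 := by
        have := g.2
        rw [Matrix.det_fin_two] at this
        exact this
      have hgeq : (g : Matrix (Fin 2) (Fin 2) F) = !![p, q; r, s] := by
        ext i j; fin_cases i <;> fin_cases j <;> rfl
      rw [hgeq] at hg
      have e00 : q * (c : F) = 0 := by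
        have := congrFun (congrFun hg 0) 0
        simpa [Matrix.mul_apply, Fin.sum_univ_two] using this
      have e10 : s * (c : F) = (c' : F) * p := by
        have := congrFun (congrFun hg 1) 0
        simpa [Matrix.mul_apply, Fin.sum_univ_two] using this
      have hqz : q = 0 := by
        rcases mul_eq_zero.mp e00 with h | h
        · exact h
        · exact absurd h c.ne_zero
      have hps : p * s = 1 := by rw [hqz] at hdet; linear_combination hdet
      have hsz : s ≠ 0 := fun h => one_ne_zero (hps.symm.trans (by rw [h, mul_zero]))
      refine ⟨(Units.mk0 s hsz)⁻¹, ?_⟩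
      have key : s ^ 2 * (c : F) = (c' : F) := by
        linear_combination s * e10 + (c' : F) * hps
      ext
      push_cast
      simp only [Units.val_mk0]
      field_simp
      all_goals first
        | linear_combination (c : F) * key
        | linear_combination (-(c : F)) * key
        | linear_combination key
        | linear_combination -key
        | linear_combination ((1:F) + (c : F)) * key
        | linear_combination (-(1:F) - (c : F)) * key
        | linear_combination ((2:F) * (c : F)) * key
        | linear_combination (-(2:F) * (c : F)) * key
        | linear_combination (2:F) * key
        | linear_combination (-2:F) * key
        | ring
    · rintro ⟨u, hu⟩
      have hF : (u : F) ^ 2 = (c : F) / (c' : F) := by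
        have := congrArg Units.val hu
        push_cast at this
        exact this
      have hu2 : (u : F) ^ 2 * (c' : F) = (c : F) := by
        rw [hF, div_mul_cancel₀ _ c'.ne_zero]
      refine ⟨⟨!![(u : F), 0; 0, ((u⁻¹ : Fˣ) : F)], by
        simp [Matrix.det_fin_two_of, Units.val_inv_eq_inv_val,
          mul_inv_cancel₀ u.ne_zero]⟩, ?_⟩
      refine (conj_eq_iff _ _ _).mpr ?_
      ext i j
      fin_cases i <;> fin_cases j <;>
        simp [Matrix.mul_apply, Fin.sum_univ_two, Units.val_inv_eq_inv_val]
      field_simp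
      all_goals first
        | linear_combination hu2
        | linear_combination -hu2
        | linear_combination (2:F) * hu2
        | linear_combination (-2:F) * hu2
        | ring
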